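/- arXiv:2302.00532 — 2 statements merged into one kernel-verified Lean document; each statement's English description precedes it below -/
import Mathlib

section
/- Let 0<q<1, 0<α<2 and β>0. Then there exists a constant C>0, depending only on q, α and β, such that for every real z with 0<z<(1−q)^{−α} one has |e_{α,β}(−z;q)| ≤ C/(1+z). -/
open scoped BigOperators

/-- The infinite q-Pochhammer symbol `(a;q)_∞ = ∏_{j=0}^∞ (1 - q^j a)`. -/
noncomputable def qPochInf (q a : ℝ) : ℝ := ∏' j : ℕ, (1 - q ^ j * a)

/-- The q-gamma function `Γ_q(x) = ((q;q)_∞/(q^x;q)_∞)·(1-q)^{1-x}`. -/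
noncomputable def qGamma (q x : ℝ) : ℝ :=
  (qPochInf q q / qPochInf q (q ^ x)) * (1 - q) ^ (1 - x)

/-- The q-Mittag-Leffler function `e_{α,β}(z;q) = ∑_{k=0}^∞ z^k/Γ_q(αk+β)`. -/
noncomputable def qML (q α β z : ℝ) : ℝ := ∑' k : ℕ, z ^ k / qGamma q (α * k + β)

lemma qml_factor_pos {q a : ℝ} (hq0 : 0 < q) (hq1 : q < 1) (ha0 : 0 ≤ a) (ha1 : a < 1)
    (j : ℕ) : 0 < 1 - q ^ j * a := by
  have h1 : q ^ j ≤ 1 := pow_le_one₀ hq0.le hq1.le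
  have h2 : 0 ≤ q ^ j := pow_nonneg hq0.le j
  nlinarith

lemma qml_log_summable {q a : ℝ} (hq0 : 0 < q) (hq1 : q < 1) (ha0 : 0 ≤ a) (ha1 : a < 1) :
    Summable fun j : ℕ => Real.log (1 - q ^ j * a) := by
  rw [← summable_neg_iff]
  apply Summable.of_nonneg_of_le (f := fun j : ℕ => q ^ j * (a / (1 - a)))
  · intro j
    have := qml_factor_pos hq0 hq1 ha0 ha1 j
    have h2 : 0 ≤ q ^ j * a := mul_nonneg (pow_nonneg hq0.le j) ha0
    simp only [neg_nonneg]
    exact Real.log_nonpos (by linarith) (by linarith)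
  · intro j
    set x := q ^ j * a with hx
    have hx0 : 0 ≤ x := mul_nonneg (pow_nonneg hq0.le j) ha0
    have hxa : x ≤ a := by
      have h1 : q ^ j ≤ 1 := pow_le_one₀ hq0.le hq1.le
      nlinarith [pow_nonneg hq0.le j]
    have hpos : 0 < 1 - x := qml_factor_pos hq0 hq1 ha0 ha1 j
    have h1 : -Real.log (1 - x) = Real.log (1 - x)⁻¹ := (Real.log_inv _).symm
    have h2 : Real.log (1 - x)⁻¹ ≤ (1 - x)⁻¹ - 1 :=
      Real.log_le_sub_one_of_pos (by positivity)
    have h3 : (1 - x)⁻¹ - 1 = x / (1 - x) := by field_simp; ring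
    have h4 : x / (1 - x) ≤ x / (1 - a) :=
      div_le_div_of_nonneg_left hx0 (by linarith) (by linarith)
    have h5 : x / (1 - a) = q ^ j * (a / (1 - a)) := by rw [hx, mul_div_assoc]
    linarith
  · exact (summable_geometric_of_lt_one hq0.le hq1).mul_right _

lemma qml_poch_exp {q a : ℝ} (hq0 : 0 < q) (hq1 : q < 1) (ha0 : 0 ≤ a) (ha1 : a < 1) :
    qPochInf q a = Real.exp (∑' j : ℕ, Real.log (1 - q ^ j * a)) := by
  have h := (qml_log_summable hq0 hq1 ha0 ha1).hasSum.rexp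
  have he : (Real.exp ∘ fun j : ℕ => Real.log (1 - q ^ j * a)) =
      fun j : ℕ => 1 - q ^ j * a :=
    funext fun j => Real.exp_log (qml_factor_pos hq0 hq1 ha0 ha1 j)
  rw [he] at h
  exact h.tprod_eq

set_option maxHeartbeats 1600000 in
theorem qML_decay_bound (q α β : ℝ) (hq0 : 0 < q) (hq1 : q < 1)
    (hα0 : 0 < α) (hα2 : α < 2) (hβ : 0 < β) :
    ∃ C : ℝ, 0 < C ∧ ∀ z : ℝ, 0 < z → z < (1 - q) ^ (-α) →
      |qML q α β (-z)| ≤ C / (1 + z) := by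
  have h1q : (0:ℝ) < 1 - q := by linarith
  set Sq : ℝ := ∑' j : ℕ, Real.log (1 - q ^ j * q) with hSqdef
  have hPq : qPochInf q q = Real.exp Sq := qml_poch_exp hq0 hq1 hq0.le hq1
  set v : ℝ := (1 - q) ^ α with hvdef
  have hv : 0 < v := Real.rpow_pos_of_pos h1q α
  set K : ℝ := (1 - q) ^ (β - 1) / Real.exp Sq with hKdef
  have hKpos : 0 < K := div_pos (Real.rpow_pos_of_pos h1q _) (Real.exp_pos _)
  refine ⟨2 * K * (1 + (1 - q) ^ (-α)), by positivity, ?_⟩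
  intro z hz0 hz1
  -- basic quantities
  have hxpos : ∀ k : ℕ, 0 < α * k + β := fun k => by positivity
  set a : ℕ → ℝ := fun k => q ^ (α * k + β) with hadef
  have ha0 : ∀ k, 0 < a k := fun k => Real.rpow_pos_of_pos hq0 _
  have ha1 : ∀ k, a k < 1 := fun k => Real.rpow_lt_one hq0.le hq1 (hxpos k)
  have hamono : ∀ k, a (k + 1) ≤ a k := by
    intro k
    apply Real.rpow_le_rpow_of_exponent_ge hq0 hq1.le
    push_cast; nlinarith
  set S : ℕ → ℝ := fun k => ∑' j : ℕ, Real.log (1 - q ^ j * a k) with hSdef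
  set P : ℕ → ℝ := fun k => Real.exp (S k) with hPdef
  have hPoch : ∀ k, qPochInf q (a k) = P k :=
    fun k => qml_poch_exp hq0 hq1 (ha0 k).le (ha1 k)
  have hP0 : ∀ k, 0 < P k := fun k => Real.exp_pos _
  have hP1 : ∀ k, P k ≤ 1 := by
    intro k
    have hs : S k ≤ 0 := by
      apply tsum_nonpos
      intro j
      have := qml_factor_pos hq0 hq1 (ha0 k).le (ha1 k) j
      have h2 : 0 ≤ q ^ j * a k := mul_nonneg (pow_nonneg hq0.le j) (ha0 k).le
      exact Real.log_nonpos (by linarith) (by linarith)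
    calc P k = Real.exp (S k) := rfl
      _ ≤ Real.exp 0 := Real.exp_le_exp.mpr hs
      _ = 1 := Real.exp_zero
  have hPmono : ∀ k, P k ≤ P (k + 1) := by
    intro k
    apply Real.exp_le_exp.mpr
    apply Summable.tsum_le_tsum _ (qml_log_summable hq0 hq1 (ha0 k).le (ha1 k))
      (qml_log_summable hq0 hq1 (ha0 (k+1)).le (ha1 (k+1)))
    intro j
    apply Real.log_le_log (qml_factor_pos hq0 hq1 (ha0 k).le (ha1 k) j)
    have : q ^ j * a (k+1) ≤ q ^ j * a k :=
      mul_le_mul_of_nonneg_left (hamono k) (pow_nonneg hq0.le j)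
    linarith
  -- w
  set w : ℝ := z * v with hwdef
  have hw0 : 0 < w := mul_pos hz0 hv
  have hw1 : w < 1 := by
    have hinv : (1 - q) ^ (-α) = 1 / v := by
      rw [Real.rpow_neg h1q.le, hvdef, inv_eq_one_div]
    rw [hinv] at hz1
    calc w = z * v := rfl
      _ < (1 / v) * v := by exact mul_lt_mul_of_pos_right hz1 hv
      _ = 1 := by field_simp
  -- rewrite each term of the series
  have hterm : ∀ k : ℕ, (-z) ^ k / qGamma q (α * k + β) = K * ((-w) ^ k * P k) := by
    intro k
    have hg : qGamma q (α * k + β) = (Real.exp Sq / P k) * (1 - q) ^ (1 - (α * k + β)) := by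
      rw [qGamma, hPq, hPoch k]
    have hvk : (v : ℝ) ^ k = (1 - q) ^ (α * (k : ℝ)) := by
      rw [hvdef, ← Real.rpow_natCast ((1 - q) ^ α) k, ← Real.rpow_mul h1q.le]
    have key : v ^ k * ((1 - q) ^ (β - 1) * (1 - q) ^ (1 - (α * k + β))) = 1 := by
      rw [hvk, ← Real.rpow_add h1q, ← Real.rpow_add h1q,
        show α * (k : ℝ) + (β - 1 + (1 - (α * k + β))) = 0 by ring, Real.rpow_zero]
    have hwk : (-w) ^ k = (-z) ^ k * v ^ k := by
      rw [hwdef, show -(z * v) = (-z) * v by ring, mul_pow]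
    rw [hg, hwk, hKdef]
    have hPk := hP0 k
    have hEq := Real.exp_pos Sq
    have hrp : (0:ℝ) < (1 - q) ^ (1 - (α * k + β)) := Real.rpow_pos_of_pos h1q _
    field_simp
    linear_combination (-(z ^ k * (-1 : ℝ) ^ k)) * key
  -- the series in terms of w and P
  have hqml : qML q α β (-z) = K * ∑' k : ℕ, (-w) ^ k * P k := by
    rw [qML, ← tsum_mul_left]
    exact tsum_congr hterm
  set f : ℕ → ℝ := fun k => (-w) ^ k * P k with hfdef
  have habsf : ∀ k, |f k| ≤ w ^ k := by
    intro k
    rw [hfdef, abs_mul, abs_pow, abs_neg, abs_of_pos hw0, abs_of_pos (hP0 k)]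
    calc w ^ k * P k ≤ w ^ k * 1 := by
          exact mul_le_mul_of_nonneg_left (hP1 k) (pow_nonneg hw0.le k)
      _ = w ^ k := mul_one _
  have hf : Summable f := by
    apply Summable.of_abs
    apply Summable.of_nonneg_of_le (fun k => abs_nonneg _) habsf
      (summable_geometric_of_lt_one hw0.le hw1)
  -- pair the terms
  have hfe : Summable fun k => f (2 * k) := hf.comp_injective fun m n h => by omega
  have hfo : Summable fun k => f (2 * k + 1) := hf.comp_injective fun m n h => by omega
  have hpair : ∑' k : ℕ, f k = ∑' k : ℕ, (f (2 * k) + f (2 * k + 1)) := by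
    calc ∑' k : ℕ, f k = (∑' k : ℕ, f (2 * k)) + ∑' k : ℕ, f (2 * k + 1) :=
          (tsum_even_add_odd hfe hfo).symm
      _ = ∑' k : ℕ, (f (2 * k) + f (2 * k + 1)) := (Summable.tsum_add hfe hfo).symm
  -- bound each paired term
  set gap : ℕ → ℝ := fun k => P (2 * k + 1) - P (2 * k) with hgapdef
  have hgap0 : ∀ k, 0 ≤ gap k := fun k => by
    have := hPmono (2 * k); simp only [hgapdef]; linarith
  set h : ℕ → ℝ := fun k => gap k + (1 - w) * (w ^ 2) ^ k with hhdef
  have hgbound : ∀ k, |f (2 * k) + f (2 * k + 1)| ≤ h k := by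
    intro k
    have he : f (2 * k) = w ^ (2 * k) * P (2 * k) := by
      simp only [hfdef, Even.neg_pow (even_two_mul k)]
    have ho : f (2 * k + 1) = -(w ^ (2 * k) * w * P (2 * k + 1)) := by
      simp only [hfdef, Odd.neg_pow (⟨k, by ring⟩ : Odd (2 * k + 1)), pow_succ]; ring
    have hwk0 : 0 ≤ w ^ (2 * k) := pow_nonneg hw0.le _
    have hwk1 : w ^ (2 * k) ≤ 1 := pow_le_one₀ hw0.le hw1.le
    have hsq : (w ^ 2) ^ k = w ^ (2 * k) := by rw [← pow_mul]
    have hm := hPmono (2 * k)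
    have h1 := hP1 (2 * k + 1)
    have h0 := hP0 (2 * k)
    rw [he, ho]
    simp only [hhdef, hgapdef, hsq]
    rw [abs_le]
    have h5 := mul_nonneg (mul_nonneg hwk0 (sub_nonneg.mpr hw1.le)) (hP0 (2 * k + 1)).le
    have h6 := mul_nonneg (sub_nonneg.mpr hwk1) (sub_nonneg.mpr hm)
    have h7 := mul_nonneg (sub_nonneg.mpr hw1.le) hwk0
    have h8 := mul_nonneg hwk0 (sub_nonneg.mpr hm)
    have h9 := mul_nonneg (mul_nonneg hwk0 (sub_nonneg.mpr hw1.le)) (sub_nonneg.mpr h1)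
    constructor
    · nlinarith [h5, h6, h7]
    · nlinarith [h8, h9]
  -- summability of the bound
  have hgapsum : Summable gap := by
    apply summable_of_sum_range_le hgap0 (c := 1)
    intro n
    have key : ∀ n : ℕ, ∑ k ∈ Finset.range n, gap k ≤ P (2 * n) - P 0 := by
      intro n
      induction n with
      | zero => simp
      | succ m ih =>
        rw [Finset.sum_range_succ]
        have h1 := hPmono (2 * m + 1)
        have : 2 * (m + 1) = 2 * m + 1 + 1 := by ring
        rw [this]
        simp only [hgapdef]
        simp only [hgapdef] at ih
        linarith
    have := key n
    have := hP1 (2 * n)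
    have := hP0 0
    linarith
  have hgaptsum : ∑' k, gap k ≤ 1 := by
    apply Real.tsum_le_of_sum_range_le hgap0
    intro n
    have key : ∀ n : ℕ, ∑ k ∈ Finset.range n, gap k ≤ P (2 * n) - P 0 := by
      intro n
      induction n with
      | zero => simp
      | succ m ih =>
        rw [Finset.sum_range_succ]
        have h1 := hPmono (2 * m + 1)
        have : 2 * (m + 1) = 2 * m + 1 + 1 := by ring
        rw [this]
        simp only [hgapdef]
        simp only [hgapdef] at ih
        linarith
    have := key n
    have := hP1 (2 * n)
    have := hP0 0
    linarith
  have hw2 : w ^ 2 < 1 := by nlinarith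
  have hgeo : Summable fun k : ℕ => (w ^ 2) ^ k :=
    summable_geometric_of_lt_one (by positivity) hw2
  have hhsum : Summable h := hgapsum.add (hgeo.mul_left (1 - w))
  have hG : |∑' k : ℕ, f k| ≤ 2 := by
    rw [hpair]
    have hsum2 : Summable fun k => f (2 * k) + f (2 * k + 1) := hfe.add hfo
    calc |∑' k : ℕ, (f (2 * k) + f (2 * k + 1))|
        ≤ ∑' k : ℕ, |f (2 * k) + f (2 * k + 1)| := by
          have := norm_tsum_le_tsum_norm (f := fun k : ℕ => f (2 * k) + f (2 * k + 1))
            (by simpa [Real.norm_eq_abs] using hsum2.abs)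
          simpa [Real.norm_eq_abs] using this
      _ ≤ ∑' k : ℕ, h k := by
          apply Summable.tsum_le_tsum hgbound _ hhsum
          exact hsum2.abs
      _ = (∑' k, gap k) + (1 - w) * ∑' k : ℕ, (w ^ 2) ^ k := by
          rw [hhdef, Summable.tsum_add hgapsum (hgeo.mul_left _), tsum_mul_left]
      _ = (∑' k, gap k) + (1 - w) * (1 - w ^ 2)⁻¹ := by
          rw [tsum_geometric_of_lt_one (by positivity) hw2]
      _ ≤ 1 + 1 := by
          have hle : (1 - w) * (1 - w ^ 2)⁻¹ ≤ 1 := by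
            rw [← div_eq_mul_inv, div_le_one (by nlinarith)]
            nlinarith
          linarith
      _ = 2 := by norm_num
  -- conclude
  have hbound : |qML q α β (-z)| ≤ 2 * K := by
    rw [hqml, abs_mul, abs_of_pos hKpos]
    calc K * |∑' k : ℕ, f k| ≤ K * 2 := mul_le_mul_of_nonneg_left hG hKpos.le
      _ = 2 * K := by ring
  have hz2 : 0 < 1 + z := by linarith
  calc |qML q α β (-z)| ≤ 2 * K := hbound
    _ ≤ 2 * K * (1 + (1 - q) ^ (-α)) / (1 + z) := by
        rw [le_div_iff₀ hz2]
        nlinarith [hKpos, hz1]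
end

section
/- Let 0<q<1 and 0<α<1, and for an integer k≥0 set N_q(k) := 1/Γ_q(αk+1) − Γ_q(1−α)/Γ_q(α(k−1)+1). Then for every integer k≥0 one has N_q(k) ≤ (1−q)^{(α−1)k}/Γ_q(k+1). -/
open scoped BigOperators

/-- `N_q(k) = 1/Γ_q(αk+1) − Γ_q(1−α)/Γ_q(α(k−1)+1)`. -/
noncomputable def Nq (q α : ℝ) (k : ℕ) : ℝ :=
  1 / qGamma q (α * k + 1) - qGamma q (1 - α) / qGamma q (α * ((k : ℝ) - 1) + 1)

section Aux

variable {q a b : ℝ}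

lemma qPoch_factor_pos (hq0 : 0 ≤ q) (hq1 : q < 1) (ha0 : 0 ≤ a) (ha1 : a < 1) (j : ℕ) :
    0 < 1 - q ^ j * a := by
  have h1 : q ^ j * a ≤ 1 * a := by
    apply mul_le_mul_of_nonneg_right _ ha0
    exact pow_le_one₀ hq0 hq1.le
  have h0 : 0 ≤ q ^ j * a := by positivity
  nlinarith

lemma summable_log_qPoch (hq0 : 0 ≤ q) (hq1 : q < 1) (ha0 : 0 ≤ a) (ha1 : a < 1) :
    Summable fun j : ℕ => Real.log (1 - q ^ j * a) := by
  rw [← summable_neg_iff]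
  refine Summable.of_nonneg_of_le (fun j => ?_) (fun j => ?_)
    ((summable_geometric_of_lt_one hq0 hq1).mul_right (a / (1 - a)))
  · have hpos := qPoch_factor_pos hq0 hq1 ha0 ha1 j
    have hle : 1 - q ^ j * a ≤ 1 := by
      have : (0:ℝ) ≤ q ^ j * a := by positivity
      linarith
    simpa using Real.log_nonpos hpos.le hle
  · have hpos := qPoch_factor_pos hq0 hq1 ha0 ha1 j
    have h1 : q ^ j * a ≤ 1 * a := by
      apply mul_le_mul_of_nonneg_right _ ha0
      exact pow_le_one₀ hq0 hq1.le
    rw [one_mul] at h1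
    have h2 : -Real.log (1 - q ^ j * a) = Real.log (1 - q ^ j * a)⁻¹ := by
      rw [Real.log_inv]
    have h3 := Real.log_le_sub_one_of_pos (x := (1 - q ^ j * a)⁻¹) (by positivity)
    have h4 : (1 - q ^ j * a)⁻¹ - 1 = (q ^ j * a) / (1 - q ^ j * a) := by
      field_simp
      ring
    have h5 : (q ^ j * a) / (1 - q ^ j * a) ≤ (q ^ j * a) / (1 - a) := by
      apply div_le_div_of_nonneg_left (by positivity) (by linarith) (by linarith)
    rw [h2]
    calc Real.log (1 - q ^ j * a)⁻¹ ≤ (1 - q ^ j * a)⁻¹ - 1 := h3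
      _ = (q ^ j * a) / (1 - q ^ j * a) := h4
      _ ≤ (q ^ j * a) / (1 - a) := h5
      _ = q ^ j * (a / (1 - a)) := by ring

lemma qPochInf_hasProd (hq0 : 0 ≤ q) (hq1 : q < 1) (ha0 : 0 ≤ a) (ha1 : a < 1) :
    HasProd (fun j : ℕ => 1 - q ^ j * a)
      (Real.exp (∑' j : ℕ, Real.log (1 - q ^ j * a))) := by
  have hs := (summable_log_qPoch hq0 hq1 ha0 ha1).hasSum.rexp
  have he : Real.exp ∘ (fun j : ℕ => Real.log (1 - q ^ j * a))
      = fun j : ℕ => 1 - q ^ j * a :=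
    funext fun j => Real.exp_log (qPoch_factor_pos hq0 hq1 ha0 ha1 j)
  rwa [he] at hs

lemma qPochInf_eq_exp (hq0 : 0 ≤ q) (hq1 : q < 1) (ha0 : 0 ≤ a) (ha1 : a < 1) :
    qPochInf q a = Real.exp (∑' j : ℕ, Real.log (1 - q ^ j * a)) :=
  (qPochInf_hasProd hq0 hq1 ha0 ha1).tprod_eq

lemma qPochInf_pos (hq0 : 0 ≤ q) (hq1 : q < 1) (ha0 : 0 ≤ a) (ha1 : a < 1) :
    0 < qPochInf q a := by
  rw [qPochInf_eq_exp hq0 hq1 ha0 ha1]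
  exact Real.exp_pos _

lemma qPochInf_anti (hq0 : 0 ≤ q) (hq1 : q < 1) (ha0 : 0 ≤ a) (hab : a ≤ b) (hb1 : b < 1) :
    qPochInf q b ≤ qPochInf q a := by
  have ha1 : a < 1 := lt_of_le_of_lt hab hb1
  have hb0 : 0 ≤ b := le_trans ha0 hab
  rw [qPochInf_eq_exp hq0 hq1 ha0 ha1, qPochInf_eq_exp hq0 hq1 hb0 hb1, Real.exp_le_exp]
  apply Summable.tsum_le_tsum _ (summable_log_qPoch hq0 hq1 hb0 hb1) (summable_log_qPoch hq0 hq1 ha0 ha1)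
  intro j
  have hposb := qPoch_factor_pos hq0 hq1 hb0 hb1 j
  have hle : 1 - q ^ j * b ≤ 1 - q ^ j * a := by
    have : q ^ j * a ≤ q ^ j * b := mul_le_mul_of_nonneg_left hab (by positivity)
    linarith
  exact Real.log_le_log hposb hle

lemma qGamma_pos {x : ℝ} (hq0 : 0 < q) (hq1 : q < 1) (hx : 0 < x) :
    0 < qGamma q x := by
  have h1 : (0:ℝ) < q ^ x := Real.rpow_pos_of_pos hq0 x
  have h2 : q ^ x < 1 := Real.rpow_lt_one hq0.le hq1 hx
  apply mul_pos
  · exact div_pos (qPochInf_pos hq0.le hq1 hq0.le hq1) (qPochInf_pos hq0.le hq1 h1.le h2)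
  · exact Real.rpow_pos_of_pos (by linarith) _

lemma one_div_qGamma {x : ℝ} (hq0 : 0 < q) (hq1 : q < 1) :
    1 / qGamma q x = qPochInf q (q ^ x) / qPochInf q q * (1 - q) ^ (x - 1) := by
  have he : (0:ℝ) < 1 - q := by linarith
  rw [qGamma, one_div, mul_inv, inv_div,
    show x - 1 = -(1 - x) by ring, Real.rpow_neg he.le]

end Aux

theorem Nq_upper_bound (q α : ℝ) (hq0 : 0 < q) (hq1 : q < 1)
    (hα0 : 0 < α) (hα1 : α < 1) :
    ∀ k : ℕ, Nq q α k ≤ (1 - q) ^ ((α - 1) * k) / qGamma q ((k : ℝ) + 1) := by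
  intro k
  have he : (0:ℝ) < 1 - q := by linarith
  have hk0 : (0:ℝ) ≤ (k:ℝ) := Nat.cast_nonneg k
  have hx1 : (0:ℝ) < α * k + 1 := by positivity
  have hc : 0 < qPochInf q q := qPochInf_pos hq0.le hq1 hq0.le hq1
  -- the subtracted term is nonnegative
  have hstep1 : Nq q α k ≤ 1 / qGamma q (α * k + 1) := by
    have hg1 : 0 < qGamma q (1 - α) := qGamma_pos hq0 hq1 (by linarith)
    have hg2 : 0 < qGamma q (α * ((k:ℝ) - 1) + 1) := by
      apply qGamma_pos hq0 hq1
      nlinarith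
    have : 0 ≤ qGamma q (1 - α) / qGamma q (α * ((k:ℝ) - 1) + 1) :=
      div_nonneg hg1.le hg2.le
    rw [Nq]; linarith
  -- rewrite both sides
  have hq1le : q ^ (α * (k:ℝ) + 1) < 1 := Real.rpow_lt_one hq0.le hq1 hx1
  have hq1pos : (0:ℝ) < q ^ (α * (k:ℝ) + 1) := Real.rpow_pos_of_pos hq0 _
  have hq2pos : (0:ℝ) < q ^ ((k:ℝ) + 1) := Real.rpow_pos_of_pos hq0 _
  have hP : qPochInf q (q ^ (α * (k:ℝ) + 1)) ≤ qPochInf q (q ^ ((k:ℝ) + 1)) := by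
    apply qPochInf_anti hq0.le hq1 hq2pos.le _ hq1le
    apply Real.rpow_le_rpow_of_exponent_ge hq0 hq1.le
    nlinarith
  have hL : 1 / qGamma q (α * (k:ℝ) + 1)
      = qPochInf q (q ^ (α * (k:ℝ) + 1)) / qPochInf q q * (1 - q) ^ (α * (k:ℝ)) := by
    rw [one_div_qGamma hq0 hq1]
    norm_num
  have hR : (1 - q) ^ ((α - 1) * (k:ℝ)) / qGamma q ((k:ℝ) + 1)
      = qPochInf q (q ^ ((k:ℝ) + 1)) / qPochInf q q * (1 - q) ^ (α * (k:ℝ)) := by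
    rw [div_eq_mul_one_div, one_div_qGamma hq0 hq1]
    rw [show ((k:ℝ) + 1) - 1 = (k:ℝ) by ring]
    rw [mul_comm ((1 - q) ^ ((α - 1) * (k:ℝ)))]
    rw [mul_assoc, ← Real.rpow_add he]
    ring_nf
  calc Nq q α k ≤ 1 / qGamma q (α * k + 1) := hstep1
    _ = qPochInf q (q ^ (α * (k:ℝ) + 1)) / qPochInf q q * (1 - q) ^ (α * (k:ℝ)) := hL
    _ ≤ qPochInf q (q ^ ((k:ℝ) + 1)) / qPochInf q q * (1 - q) ^ (α * (k:ℝ)) := by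
        gcongr
    _ = (1 - q) ^ ((α - 1) * (k:ℝ)) / qGamma q ((k:ℝ) + 1) := hR.symm
end
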